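/- Let V be a finite-dimensional real inner product space, Cl(V) its Clifford algebra (with relation v·v = −|v|²), and S a Cl(V)-module with Clifford multiplication γ extended to exterior forms. Then for any 2-form η ∈ Λ²V one has γ(η)² = γ(η ∧ η) − |η|² · Id on S. -/

import Mathlib

open scoped RealInnerProductSpace

/-- The quadratic form `v ↦ -|v|²` defining the Clifford algebra `Cl(V)` with relation
`v·v = -|v|²`. -/
noncomputable def negNormSqForm (V : Type*) [NormedAddCommGroup V]
    [InnerProductSpace ℝ V] : QuadraticForm ℝ V :=
  - LinearMap.BilinMap.toQuadraticMap (innerₗ V : LinearMap.BilinForm ℝ V)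

namespace Stmt5Aux
variable {V : Type*} [NormedAddCommGroup V] [InnerProductSpace ℝ V]

lemma negNormSqForm_apply (x : V) : negNormSqForm V x = -⟪x,x⟫ := rfl

/-- The bilinear form used by `changeForm` for the inverse of `equivExterior`. -/
noncomputable def Bf (V : Type*) [NormedAddCommGroup V] [InnerProductSpace ℝ V] :
    LinearMap.BilinForm ℝ V :=
  -(QuadraticMap.associated (R := ℝ) (-(negNormSqForm V)))

lemma hBf : (Bf V).toQuadraticMap = negNormSqForm V - 0 :=
  CliffordAlgebra.changeForm.neg_proof CliffordAlgebra.changeForm.associated_neg_proof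

lemma Bf_apply (x y : V) : Bf V x y = -⟪x,y⟫ := by
  simp [Bf, QuadraticMap.associated_apply, negNormSqForm_apply, real_inner_add_add_self,
    real_inner_comm]
  rw [norm_add_sq_real]
  ring

lemma c_eq (x : ExteriorAlgebra ℝ V) :
    (CliffordAlgebra.equivExterior (negNormSqForm V)).symm x =
      CliffordAlgebra.changeForm hBf x := by
  rw [CliffordAlgebra.equivExterior, CliffordAlgebra.changeFormEquiv_symm]
  rfl

local notation "e" => CliffordAlgebra.ι (negNormSqForm V)
local notation "ιE" => ExteriorAlgebra.ι ℝ

lemma c2 (x y : V) :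
    CliffordAlgebra.changeForm hBf (ιE x * ιE y) =
      e x * e y + algebraMap ℝ _ ⟪x,y⟫ := by
  rw [CliffordAlgebra.changeForm_ι_mul_ι, Bf_apply, map_neg, sub_neg_eq_add]

lemma c3 (x2 x3 x4 : V) :
    CliffordAlgebra.changeForm hBf (ιE x2 * (ιE x3 * ιE x4)) =
      e x2 * (e x3 * e x4) + ⟪x3,x4⟫ • e x2 + ⟪x2,x3⟫ • e x4 - ⟪x2,x4⟫ • e x3 := by
  rw [CliffordAlgebra.changeForm_ι_mul, c2, map_add, CliffordAlgebra.contractLeft_ι_mul,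
    CliffordAlgebra.contractLeft_ι, CliffordAlgebra.contractLeft_algebraMap]
  simp only [Bf_apply, Algebra.algebraMap_eq_smul_one, mul_add, Algebra.mul_smul_comm,
    mul_one, mul_neg, neg_smul, smul_neg, add_zero, mul_zero, sub_neg_eq_add]
  module

lemma c4 (x1 x2 x3 x4 : V) :
    CliffordAlgebra.changeForm hBf (ιE x1 * (ιE x2 * (ιE x3 * ιE x4))) =
      e x1 * (e x2 * (e x3 * e x4))
      + ⟪x3,x4⟫ • (e x1 * e x2) + ⟪x2,x3⟫ • (e x1 * e x4) - ⟪x2,x4⟫ • (e x1 * e x3)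
      + ⟪x1,x2⟫ • (e x3 * e x4) - ⟪x1,x3⟫ • (e x2 * e x4) + ⟪x1,x4⟫ • (e x2 * e x3)
      + (⟪x1,x2⟫*⟪x3,x4⟫ + ⟪x1,x4⟫*⟪x2,x3⟫ - ⟪x1,x3⟫*⟪x2,x4⟫) •
          (1 : CliffordAlgebra (negNormSqForm V)) := by
  rw [CliffordAlgebra.changeForm_ι_mul, c3]
  simp only [map_add, map_sub, map_smul, CliffordAlgebra.contractLeft_ι_mul,
    CliffordAlgebra.contractLeft_ι, Bf_apply, Algebra.algebraMap_eq_smul_one,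
    mul_add, mul_sub, mul_neg, mul_one, Algebra.mul_smul_comm, smul_smul,
    smul_add, smul_sub, smul_neg, neg_smul, sub_neg_eq_add]
  module

lemma polar_negNormSqForm (x y : V) :
    QuadraticMap.polar (negNormSqForm V) x y = -(2*⟪x,y⟫) := by
  simp [QuadraticMap.polar, negNormSqForm_apply, real_inner_add_add_self, real_inner_comm]
  rw [norm_add_sq_real]
  ring

lemma swap_mul (x y : V) :
    e y * e x = -((2*⟪x,y⟫) • (1 : CliffordAlgebra (negNormSqForm V))) - e x * e y := by
  have h := CliffordAlgebra.ι_mul_ι_add_swap (Q := negNormSqForm V) x y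
  rw [polar_negNormSqForm, map_neg, Algebra.algebraMap_eq_smul_one] at h
  exact eq_sub_of_add_eq' h

lemma Dlem (p q r s : V) :
    ((e p * e q + algebraMap ℝ _ ⟪p,q⟫) * (e r * e s + algebraMap ℝ _ ⟪r,s⟫)
        + (⟪p,r⟫*⟪q,s⟫ - ⟪p,s⟫*⟪q,r⟫) • (1 : CliffordAlgebra (negNormSqForm V)))
      + ((e r * e s + algebraMap ℝ _ ⟪r,s⟫) * (e p * e q + algebraMap ℝ _ ⟪p,q⟫)
        + (⟪r,p⟫*⟪s,q⟫ - ⟪r,q⟫*⟪s,p⟫) • (1 : CliffordAlgebra (negNormSqForm V)))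
    = (e p * (e q * (e r * e s))
        + ⟪r,s⟫ • (e p * e q) + ⟪q,r⟫ • (e p * e s) - ⟪q,s⟫ • (e p * e r)
        + ⟪p,q⟫ • (e r * e s) - ⟪p,r⟫ • (e q * e s) + ⟪p,s⟫ • (e q * e r)
        + (⟪p,q⟫*⟪r,s⟫ + ⟪p,s⟫*⟪q,r⟫ - ⟪p,r⟫*⟪q,s⟫) • (1 : CliffordAlgebra (negNormSqForm V)))
      + (e r * (e s * (e p * e q))
        + ⟪p,q⟫ • (e r * e s) + ⟪s,p⟫ • (e r * e q) - ⟪s,q⟫ • (e r * e p)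
        + ⟪r,s⟫ • (e p * e q) - ⟪r,p⟫ • (e s * e q) + ⟪r,q⟫ • (e s * e p)
        + (⟪r,s⟫*⟪p,q⟫ + ⟪r,q⟫*⟪s,p⟫ - ⟪r,p⟫*⟪s,q⟫) • (1 : CliffordAlgebra (negNormSqForm V))) := by
  rw [swap_mul q r, swap_mul p r, swap_mul q s, swap_mul p s]
  simp only [Algebra.algebraMap_eq_smul_one, mul_add, add_mul, smul_mul_assoc, mul_smul_comm,
    one_mul, mul_one, mul_assoc, smul_smul, smul_add, smul_sub, sub_smul, add_smul, smul_neg,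
    neg_smul, real_inner_comm]
  module

lemma sum_helper {α : Type*} [AddCommGroup α] [Module ℝ α] {n : ℕ}
    (A B : Fin n → Fin n → α) (h : ∀ l m, A l m + A m l = B l m + B m l) :
    (∑ l, ∑ m, A l m) = ∑ l, ∑ m, B l m := by
  have h2 : (2:ℝ) • (∑ l, ∑ m, A l m) = (2:ℝ) • (∑ l, ∑ m, B l m) := by
    rw [two_smul, two_smul]
    calc (∑ l, ∑ m, A l m) + (∑ l, ∑ m, A l m)
        = (∑ l, ∑ m, A l m) + (∑ l, ∑ m, A m l) := by rw [Finset.sum_comm]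
      _ = ∑ l, ∑ m, (A l m + A m l) := by
          simp only [← Finset.sum_add_distrib]
      _ = ∑ l, ∑ m, (B l m + B m l) := by simp only [h]
      _ = (∑ l, ∑ m, B l m) + (∑ l, ∑ m, B m l) := by
          simp only [Finset.sum_add_distrib]
      _ = (∑ l, ∑ m, B l m) + (∑ l, ∑ m, B l m) := by
          rw [Finset.sum_comm (f := fun l m => B m l)]
  have := congrArg (fun x => (2:ℝ)⁻¹ • x) h2
  simpa [smul_smul] using this

end Stmt5Aux

theorem stmt_5 {V : Type*} [NormedAddCommGroup V] [InnerProductSpace ℝ V]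
    [FiniteDimensional ℝ V]
    {S : Type*} [AddCommGroup S] [Module ℝ S]
    [Module (CliffordAlgebra (negNormSqForm V)) S]
    [IsScalarTower ℝ (CliffordAlgebra (negNormSqForm V)) S]
    (c : ExteriorAlgebra ℝ V →ₗ[ℝ] CliffordAlgebra (negNormSqForm V))
    (hc : c = (CliffordAlgebra.equivExterior (negNormSqForm V)).symm.toLinearMap)
    {s : ℕ} (v w : Fin s → V) (η : ExteriorAlgebra ℝ V)
    (hη : η = ∑ l, ExteriorAlgebra.ι ℝ (v l) * ExteriorAlgebra.ι ℝ (w l))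
    (normSq : ℝ)
    (hnorm : normSq = ∑ l, ∑ m,
      (⟪v l, v m⟫ * ⟪w l, w m⟫ - ⟪v l, w m⟫ * ⟪w l, v m⟫)) :
    ∀ φ : S, c η • (c η • φ) = c (η * η) • φ - normSq • φ := by
  have hc' : ∀ x : ExteriorAlgebra ℝ V, c x = CliffordAlgebra.changeForm Stmt5Aux.hBf x := by
    intro x; rw [hc]; exact Stmt5Aux.c_eq x
  have key : c η * c η + normSq • (1 : CliffordAlgebra (negNormSqForm V)) = c (η * η) := by
    rw [hc' η, hc' (η * η), hη, hnorm]
    rw [map_sum, Finset.sum_mul_sum, Finset.sum_mul_sum]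
    simp only [map_sum, mul_assoc, Stmt5Aux.c2, Stmt5Aux.c4, Finset.sum_smul,
      ← Finset.sum_add_distrib]
    exact Stmt5Aux.sum_helper _ _
      (fun l m => Stmt5Aux.Dlem (v l) (w l) (v m) (w m))
  intro φ
  rw [← mul_smul, ← key, add_smul, smul_assoc, one_smul]
  abel
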